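/- Let F be a finite field and let D ∈ F[t] be monic of degree 5. Then the cubic equation x³ + x + D = 0 has no solution x in the rational function field F(t): there is no x ∈ RatFunc F with x³ + x + ι(D) = 0, where ι : F[t] → RatFunc F is the canonical embedding. -/
import Mathlib


open Polynomial

theorem no_ratfunc_cubic_solution
    (F : Type*) [Field F] [Fintype F]
    (D : Polynomial F) (hmonic : D.Monic) (hdeg : D.natDegree = 5) :
    ¬ ∃ x : RatFunc F,
      x ^ 3 + x + algebraMap (Polynomial F) (RatFunc F) D = 0 := by
  rintro ⟨x, hx⟩
  -- x is integral over F[t]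
  have hint : IsIntegral (Polynomial F) x := by
    refine ⟨X ^ 3 + X + C D, ?_, ?_⟩
    · rw [add_assoc]
      have hle : (X + C D : (Polynomial F)[X]).degree < (3 : ℕ) := by
        refine (Polynomial.degree_add_le _ _).trans_lt ?_
        rw [Polynomial.degree_X]
        exact max_lt (by decide) (Polynomial.degree_C_le.trans_lt (by decide))
      exact Polynomial.monic_X_pow_add hle
    · simpa using hx
  obtain ⟨p, hp⟩ := IsIntegrallyClosed.isIntegral_iff.mp hint
  rw [← hp, ← map_pow, ← map_add, ← map_add] at hx
  have hx0 : p ^ 3 + p + D = 0 := by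
    have := IsFractionRing.injective (Polynomial F) (RatFunc F)
    apply this
    simpa using hx
  have hD : p ^ 3 + p = -D := by linear_combination hx0
  have hdegD : (-D).natDegree = 5 := by simpa using hdeg
  by_cases hp0 : p.natDegree = 0
  · have h5 : (p ^ 3 + p).natDegree ≤ 0 := by
      refine le_trans (Polynomial.natDegree_add_le _ _) ?_
      simp [Polynomial.natDegree_pow, hp0]
    rw [hD, hdegD] at h5
    omega
  · have hpd : p.degree = (p.natDegree : ℕ) := Polynomial.degree_eq_natDegree (by
      intro h; simp [h] at hp0)
    have hlt : p.degree < (p ^ 3).degree := by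
      rw [Polynomial.degree_pow, hpd, nsmul_eq_mul]
      exact_mod_cast show p.natDegree < 3 * p.natDegree by omega
    have h3 : (p ^ 3 + p).natDegree = 3 * p.natDegree := by
      rw [Polynomial.natDegree_eq_of_degree_eq
        (Polynomial.degree_add_eq_left_of_degree_lt hlt)]
      exact Polynomial.natDegree_pow p 3
    rw [hD, hdegD] at h3
    omega
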